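/- Suppose φ ↦ ν_φ assigns to each φ ∈ C a finite signed measure ν_φ on [−r,0] such that (i) ‖ν_φ‖_{TV} ≤ M_{Vg} for all φ ∈ C, and (ii) for every θ ∈ [−r,0] and every sequence φⁿ → φ in C one has ν_{φⁿ}([−r,θ]) → ν_φ([−r,θ]). Let b : ℝ → ℝ be Lipschitz with constant L_b and satisfy |b(s)| ≤ C₁|s| + C₂ for all s. Then the map F_c : C → L²(Ω), F_c(φ)(x) := ∫_{[−r,0]} ( ∫_Ω b(φ(θ)(y)) f(x−y) dy ) dν_φ(θ), is continuous: φⁿ → φ in C implies ‖F_c(φⁿ) − F_c(φ)‖_{L²(Ω)} → 0. -/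

import Mathlib

open MeasureTheory Set Filter Topology

/-- Integral of a real function against a (finite) signed measure, defined via the
Jordan decomposition: `∫ g dν := ∫ g dν⁺ − ∫ g dν⁻`. -/
noncomputable def sintegral {α : Type*} [MeasurableSpace α]
    (ν : MeasureTheory.SignedMeasure α) (g : α → ℝ) : ℝ :=
  ∫ a, g a ∂ν.toJordanDecomposition.posPart - ∫ a, g a ∂ν.toJordanDecomposition.negPart

/-- Total variation norm `‖ν‖_{TV}` of a signed measure. -/
noncomputable def tvNorm {α : Type*} [MeasurableSpace α]
    (ν : MeasureTheory.SignedMeasure α) : ℝ :=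
  (ν.totalVariation Set.univ).toReal

section helpers
variable {α : Type*} [MeasurableSpace α]

lemma tvNorm_nonneg (ν : MeasureTheory.SignedMeasure α) : 0 ≤ tvNorm ν :=
  ENNReal.toReal_nonneg

lemma signedMeasure_apply_eq (ν : MeasureTheory.SignedMeasure α) {A : Set α}
    (hA : MeasurableSet A) :
    ν A = (ν.toJordanDecomposition.posPart A).toReal
      - (ν.toJordanDecomposition.negPart A).toReal := by
  conv_lhs => rw [← ν.toSignedMeasure_toJordanDecomposition]
  rw [MeasureTheory.JordanDecomposition.toSignedMeasure,
    MeasureTheory.Measure.toSignedMeasure_sub_apply hA]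
  rfl

/-- bounded a.e.-strongly-measurable functions are integrable on finite measures -/
lemma integrable_of_bdd {μ : Measure α} [IsFiniteMeasure μ] {g : α → ℝ} {K : ℝ}
    (hm : AEStronglyMeasurable g μ) (hb : ∀ a, |g a| ≤ K) : Integrable g μ :=
  (MemLp.of_bound hm K (Filter.Eventually.of_forall (by simpa using hb)) :
    MemLp g 1 μ).integrable le_rfl

lemma sintegral_sub (ν : MeasureTheory.SignedMeasure α) {g h : α → ℝ}
    (hg₁ : Integrable g ν.toJordanDecomposition.posPart)
    (hg₂ : Integrable g ν.toJordanDecomposition.negPart)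
    (hh₁ : Integrable h ν.toJordanDecomposition.posPart)
    (hh₂ : Integrable h ν.toJordanDecomposition.negPart) :
    sintegral ν g - sintegral ν h = sintegral ν (fun a => g a - h a) := by
  unfold sintegral
  rw [integral_sub hg₁ hh₁, integral_sub hg₂ hh₂]
  ring

lemma abs_sintegral_le (ν : MeasureTheory.SignedMeasure α) {g : α → ℝ} {K : ℝ}
    (hb : ∀ a, |g a| ≤ K) :
    |sintegral ν g| ≤ K * tvNorm ν := by
  have h1 : ‖∫ a, g a ∂ν.toJordanDecomposition.posPart‖
      ≤ K * (ν.toJordanDecomposition.posPart Set.univ).toReal :=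
    norm_integral_le_of_norm_le_const (Filter.Eventually.of_forall (by simpa using hb))
  have h2 : ‖∫ a, g a ∂ν.toJordanDecomposition.negPart‖
      ≤ K * (ν.toJordanDecomposition.negPart Set.univ).toReal :=
    norm_integral_le_of_norm_le_const (Filter.Eventually.of_forall (by simpa using hb))
  have htv : tvNorm ν = (ν.toJordanDecomposition.posPart Set.univ).toReal
      + (ν.toJordanDecomposition.negPart Set.univ).toReal := by
    rw [tvNorm, MeasureTheory.SignedMeasure.totalVariation, Measure.add_apply,
      ENNReal.toReal_add (measure_ne_top _ _) (measure_ne_top _ _)]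
  rw [htv, sintegral]
  calc |∫ a, g a ∂ν.toJordanDecomposition.posPart - ∫ a, g a ∂ν.toJordanDecomposition.negPart|
      ≤ ‖∫ a, g a ∂ν.toJordanDecomposition.posPart‖
        + ‖∫ a, g a ∂ν.toJordanDecomposition.negPart‖ := abs_sub _ _
    _ ≤ K * (ν.toJordanDecomposition.posPart Set.univ).toReal
        + K * (ν.toJordanDecomposition.negPart Set.univ).toReal := add_le_add h1 h2
    _ = K * _ := by ring

lemma sintegral_indicator (ν : MeasureTheory.SignedMeasure α) {A : Set α}
    (hA : MeasurableSet A) (c : ℝ) :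
    sintegral ν (A.indicator fun _ => c) = c * ν A := by
  rw [sintegral, integral_indicator_const _ hA, integral_indicator_const _ hA,
    signedMeasure_apply_eq ν hA]
  simp [smul_eq_mul]
  simp only [Measure.real]
  ring

end helpers

section dct
variable {α : Type*} [MeasurableSpace α]

/-- Dominated convergence for `eLpNorm _ 2` on a finite measure space. -/
lemma tendsto_eLpNorm_two_of_bdd (μ : Measure α) [IsFiniteMeasure μ]
    (D : ℕ → α → ℝ) (hm : ∀ n, AEStronglyMeasurable (D n) μ) {K : ℝ}
    (hb : ∀ n a, |D n a| ≤ K)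
    (hpt : ∀ a, Tendsto (fun n => D n a) atTop (𝓝 0)) :
    Tendsto (fun n => eLpNorm (D n) 2 μ) atTop (𝓝 0) := by
  have hmem : ∀ n, MemLp (D n) 2 μ := fun n =>
    MemLp.of_bound (hm n) K (Filter.Eventually.of_forall (by simpa using hb n))
  have heq : ∀ n, eLpNorm (D n) 2 μ
      = ENNReal.ofReal ((∫ a, ‖D n a‖ ^ (2:ℝ) ∂μ) ^ (2:ℝ)⁻¹) := by
    intro n
    have := (hmem n).eLpNorm_eq_integral_rpow_norm (by norm_num) (by norm_num)
    simpa using this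
  simp only [heq]
  have hint : Tendsto (fun n => ∫ a, ‖D n a‖ ^ (2:ℝ) ∂μ) atTop (𝓝 0) := by
    have h0 : (0:ℝ) = ∫ (_ : α), (0:ℝ) ∂μ := by simp
    rw [h0]
    apply tendsto_integral_of_dominated_convergence (fun _ => K ^ (2:ℝ))
    · intro n
      exact (Real.continuous_rpow_const (by norm_num : (0:ℝ) ≤ 2)).comp_aestronglyMeasurable
        (hm n).norm
    · exact integrable_const _
    · intro n
      refine Filter.Eventually.of_forall fun a => ?_
      have h1 : |D n a| ≤ K := hb n a
      have h2 : (0:ℝ) ≤ |D n a| := abs_nonneg _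
      rw [Real.norm_eq_abs, abs_of_nonneg (Real.rpow_nonneg (norm_nonneg _) _)]
      exact Real.rpow_le_rpow (norm_nonneg _) (by simpa using h1) (by norm_num)
    · refine Filter.Eventually.of_forall fun a => ?_
      have : Tendsto (fun n => ‖D n a‖) atTop (𝓝 0) := by
        simpa using (hpt a).norm
      have hc : Continuous fun t : ℝ => t ^ (2:ℝ) := by
        exact Real.continuous_rpow_const (by norm_num)
      have := (hc.tendsto 0).comp this
      simpa [Function.comp_def, Real.zero_rpow (by norm_num : (2:ℝ) ≠ 0)] using this
  have hroot : Tendsto (fun n => (∫ a, ‖D n a‖ ^ (2:ℝ) ∂μ) ^ (2:ℝ)⁻¹) atTop (𝓝 0) := by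
    have hc : ContinuousAt (fun t : ℝ => t ^ ((2:ℝ)⁻¹)) 0 :=
      Real.continuousAt_rpow_const 0 _ (Or.inr (by norm_num))
    have := hc.tendsto.comp hint
    simpa [Function.comp_def, Real.zero_rpow (by norm_num : ((2:ℝ)⁻¹) ≠ 0)] using this
  have := (ENNReal.continuous_ofReal.tendsto 0).comp hroot
  simpa [Function.comp_def] using this

end dct

section helly

/-- Helly's second theorem on `[−r,0]`. -/
lemma helly {r : ℝ} (hr : 0 < r)
    (νn : ℕ → MeasureTheory.SignedMeasure (Set.Icc (-r) (0:ℝ)))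
    (ν0 : MeasureTheory.SignedMeasure (Set.Icc (-r) (0:ℝ)))
    {MVg : ℝ} (hbd : ∀ n, tvNorm (νn n) ≤ MVg) (hbd0 : tvNorm ν0 ≤ MVg)
    (hcdf : ∀ θ : Set.Icc (-r) (0:ℝ),
      Tendsto (fun n => νn n {τ : Set.Icc (-r) (0:ℝ) | (τ : ℝ) ≤ (θ : ℝ)}) atTop
        (𝓝 (ν0 {τ : Set.Icc (-r) (0:ℝ) | (τ : ℝ) ≤ (θ : ℝ)})))
    (g : Set.Icc (-r) (0:ℝ) → ℝ) (hg : Continuous g) :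
    Tendsto (fun n => sintegral (νn n) g) atTop (𝓝 (sintegral ν0 g)) := by
  have hMVg0 : 0 ≤ MVg := le_trans (tvNorm_nonneg (νn 0)) (hbd 0)
  haveI : CompactSpace (Set.Icc (-r) (0:ℝ)) := isCompact_iff_compactSpace.mp isCompact_Icc
  obtain ⟨Kg, hKg⟩ : ∃ Kg : ℝ, ∀ τ : Set.Icc (-r) (0:ℝ), |g τ| ≤ Kg :=
    ⟨‖ContinuousMap.mk g hg‖, fun τ => (ContinuousMap.mk g hg).norm_coe_le_norm τ⟩
  rw [Metric.tendsto_atTop]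
  intro ε hε
  set ε₁ := ε / (4 * (MVg + 1)) with hε₁def
  have hε₁ : 0 < ε₁ := div_pos hε (by linarith)
  have hgu : UniformContinuous g := CompactSpace.uniformContinuous_of_continuous hg
  obtain ⟨δ, hδ, hδg⟩ := Metric.uniformContinuous_iff.mp hgu ε₁ hε₁
  obtain ⟨N, hN⟩ := exists_nat_gt (r / δ)
  have hN0 : 0 < (N:ℝ) := lt_trans (div_pos hr hδ) hN
  have hmesh : r / N < δ := by
    rw [div_lt_iff₀ hN0]
    calc r = (r/δ) * δ := by field_simp
    _ < N * δ := by apply mul_lt_mul_of_pos_right hN hδ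
    _ = δ * N := mul_comm _ _
  have hmesh0 : 0 < r / N := div_pos hr hN0
  set x : ℕ → ℝ := fun i => -r + (min i N : ℕ) * (r / N) with hxdef
  have hxmem : ∀ i, x i ∈ Set.Icc (-r) (0:ℝ) := by
    intro i
    constructor
    · have : (0:ℝ) ≤ (min i N : ℕ) * (r/N) := by positivity
      simp only [hxdef]; linarith
    · have h1 : ((min i N : ℕ) : ℝ) ≤ (N:ℝ) := by exact_mod_cast min_le_right i N
      have : ((min i N : ℕ) : ℝ) * (r/N) ≤ N * (r/N) :=
        mul_le_mul_of_nonneg_right h1 (le_of_lt hmesh0)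
      have h2 : (N:ℝ) * (r/N) = r := by field_simp
      simp only [hxdef]; linarith
  have hxmono : Monotone x := by
    intro i j hij
    have : ((min i N : ℕ):ℝ) ≤ ((min j N : ℕ):ℝ) := by
      exact_mod_cast min_le_min hij (le_refl N)
    exact add_le_add (le_refl _) (mul_le_mul_of_nonneg_right this (le_of_lt hmesh0))
  have hxN : x N = 0 := by
    simp only [hxdef, min_self]
    field_simp
    ring
  set θi : ℕ → Set.Icc (-r) (0:ℝ) := fun i => ⟨x i, hxmem i⟩ with hθdef
  set S : ℕ → Set (Set.Icc (-r) (0:ℝ)) := fun i => {τ | (τ:ℝ) ≤ x i} with hSdef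
  have hSmeas : ∀ i, MeasurableSet (S i) := by
    intro i
    have : IsClosed (S i) := IsClosed.preimage continuous_subtype_val isClosed_Iic
    exact this.measurableSet
  have hSmono : ∀ ⦃i j⦄, i ≤ j → S i ⊆ S j := fun i j hij τ hτ => le_trans hτ (hxmono hij)
  set A : ℕ → Set (Set.Icc (-r) (0:ℝ)) :=
    fun i => Nat.casesOn i (S 0) (fun k => S (k+1) \ S k) with hAdef
  have hAmeas : ∀ i, MeasurableSet (A i) := by
    intro i
    cases i with
    | zero => exact hSmeas 0
    | succ k => exact (hSmeas (k+1)).diff (hSmeas k)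
  have hAsubS : ∀ i, A i ⊆ S i := by
    intro i
    cases i with
    | zero => exact subset_rfl
    | succ k => exact Set.diff_subset
  set s : Set.Icc (-r) (0:ℝ) → ℝ :=
    fun τ => ∑ i ∈ Finset.range (N+1), (A i).indicator (fun _ => g (θi i)) τ with hsdef
  have hkey : ∀ τ : Set.Icc (-r) (0:ℝ), ∃ i ≤ N, τ ∈ A i ∧ s τ = g (θi i) ∧ dist τ (θi i) < δ := by
    intro τ
    have hexists : ∃ i, τ ∈ S i :=
      ⟨N, show (τ:ℝ) ≤ x N by rw [hxN]; exact τ.2.2⟩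
    classical
    set k := Nat.find hexists with hkdef
    have hk : τ ∈ S k := Nat.find_spec hexists
    have hkmin : ∀ j < k, τ ∉ S j := fun j hj => Nat.find_min hexists hj
    have hkN : k ≤ N := Nat.find_le (show (τ:ℝ) ≤ x N by rw [hxN]; exact τ.2.2)
    have hkA : τ ∈ A k := by
      rcases Nat.eq_zero_or_eq_succ_pred k with hk2 | hk2
      · rw [hk2] at hk ⊢; exact hk
      · rw [hk2] at hk ⊢
        exact ⟨hk, hkmin (k-1) (by omega)⟩
    refine ⟨k, hkN, hkA, ?_, ?_⟩
    · have hval : s τ = ∑ i ∈ Finset.range (N+1), (A i).indicator (fun _ => g (θi i)) τ := rfl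
      rw [hval]
      refine (Finset.sum_eq_single_of_mem k (Finset.mem_range.mpr (by omega)) ?_).trans
        (Set.indicator_of_mem hkA _)
      intro j _ hjk
      apply Set.indicator_of_notMem
      rcases lt_or_gt_of_ne hjk with h | h
      · exact fun hmem => hkmin j h (hAsubS j hmem)
      · rcases Nat.eq_zero_or_eq_succ_pred j with hj2 | hj2
        · omega
        · rw [hj2]
          intro hmem
          exact hmem.2 (hSmono (by omega : k ≤ j - 1) hk)
    · have hdist : dist τ (θi k) = |(τ:ℝ) - x k| := Subtype.dist_eq τ (θi k)
      rcases Nat.eq_zero_or_eq_succ_pred k with hk2 | hk2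
      · have h1 : (τ:ℝ) ≤ x 0 := by rw [hk2] at hk; exact hk
        have h2 : x 0 = -r := by simp [hxdef]
        have h3 : -r ≤ (τ:ℝ) := τ.2.1
        have heq : (τ:ℝ) = x k := by rw [hk2]; linarith
        rw [hdist, heq]
        simpa using hδ
      · obtain ⟨m, hk3⟩ : ∃ m, k = m + 1 := ⟨k - 1, hk2⟩
        have hm1 : m + 1 ≤ N := by omega
        have hub : (τ:ℝ) ≤ x (m+1) := by rw [hk3] at hk; exact hk
        have hlb : x m < (τ:ℝ) := by
          by_contra hcon
          push_neg at hcon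
          exact hkmin m (by omega) hcon
        have hxd : x (m+1) - x m = r / N := by
          have e1 : min (m+1) N = m+1 := min_eq_left hm1
          have e2 : min m N = m := min_eq_left (by omega)
          simp only [hxdef, e1, e2]
          push_cast
          ring
        rw [hdist, hk3, abs_sub_lt_iff]
        have hgen : ∀ a c t : ℝ, t ≤ a → c < t → a - c = r / N → r / N < δ → 0 < δ →
            t - a < δ ∧ a - t < δ := by
          intro a c t h1 h2 h3 h4 h5
          constructor <;> linarith
        exact hgen (x (m+1)) (x m) (τ:ℝ) hub hlb hxd hmesh hδ
  have hgs : ∀ τ, |g τ - s τ| ≤ ε₁ := by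
    intro τ
    obtain ⟨i, _, _, hsv, hd⟩ := hkey τ
    rw [hsv]
    have := hδg hd
    rw [Real.dist_eq] at this
    exact le_of_lt this
  have hsmeas : Measurable s := by
    apply Finset.measurable_sum
    intro i _
    exact measurable_const.indicator (hAmeas i)
  have hsbdd : ∀ τ, |s τ| ≤ Kg := by
    intro τ
    obtain ⟨i, _, _, hsv, _⟩ := hkey τ
    rw [hsv]; exact hKg _
  have hsint : ∀ m : MeasureTheory.SignedMeasure (Set.Icc (-r) (0:ℝ)),
      sintegral m s = ∑ i ∈ Finset.range (N+1), g (θi i) * m (A i) := by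
    intro m
    have h1 : ∀ (mm : MeasureTheory.Measure (Set.Icc (-r) (0:ℝ))), IsFiniteMeasure mm →
        ∫ τ, s τ ∂mm = ∑ i ∈ Finset.range (N+1), (mm (A i)).toReal * g (θi i) := by
      intro mm hfin
      have : ∫ τ, s τ ∂mm
          = ∫ τ, (∑ i ∈ Finset.range (N+1), (A i).indicator (fun _ => g (θi i)) τ) ∂mm := rfl
      rw [this, integral_finset_sum]
      · refine Finset.sum_congr rfl fun i _ => ?_
        rw [integral_indicator_const _ (hAmeas i)]
        simp [smul_eq_mul, Measure.real]
      · intro i _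
        exact (integrable_const _).indicator (hAmeas i)
    rw [sintegral, h1 _ inferInstance, h1 _ inferInstance, ← Finset.sum_sub_distrib]
    refine Finset.sum_congr rfl fun i _ => ?_
    rw [signedMeasure_apply_eq m (hAmeas i)]
    ring
  have hgint' : ∀ (mm : MeasureTheory.Measure (Set.Icc (-r) (0:ℝ))) (_ : IsFiniteMeasure mm),
      Integrable g mm := fun mm hfin => integrable_of_bdd hg.aestronglyMeasurable hKg
  have hsint' : ∀ (mm : MeasureTheory.Measure (Set.Icc (-r) (0:ℝ))) (_ : IsFiniteMeasure mm),
      Integrable s mm := fun mm hfin => integrable_of_bdd hsmeas.aestronglyMeasurable hsbdd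
  have hstepconv : Tendsto (fun n => sintegral (νn n) s) atTop (𝓝 (sintegral ν0 s)) := by
    simp only [hsint]
    apply tendsto_finset_sum
    intro i _
    apply Tendsto.const_mul
    cases i with
    | zero => exact hcdf (θi 0)
    | succ m =>
      have heq : ∀ mm : MeasureTheory.SignedMeasure (Set.Icc (-r) (0:ℝ)),
          mm (A (m+1)) = mm (S (m+1)) - mm (S m) :=
        fun mm => MeasureTheory.VectorMeasure.of_diff (hSmeas m) (hSmeas (m+1))
          (hSmono (by omega))
      simp only [heq]
      exact Tendsto.sub (hcdf (θi (m+1))) (hcdf (θi m))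
  rw [Metric.tendsto_atTop] at hstepconv
  obtain ⟨N₂, hN₂⟩ := hstepconv (ε/2) (by linarith)
  refine ⟨N₂, fun n hn => ?_⟩
  have hdiff : ∀ m : MeasureTheory.SignedMeasure (Set.Icc (-r) (0:ℝ)),
      |sintegral m g - sintegral m s| ≤ ε₁ * tvNorm m := by
    intro m
    rw [sintegral_sub m (hgint' _ inferInstance) (hgint' _ inferInstance)
      (hsint' _ inferInstance) (hsint' _ inferInstance)]
    exact abs_sintegral_le m hgs
  have h1 : |sintegral (νn n) g - sintegral (νn n) s| ≤ ε₁ * MVg :=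
    le_trans (hdiff (νn n)) (mul_le_mul_of_nonneg_left (hbd n) (le_of_lt hε₁))
  have h2 : |sintegral ν0 g - sintegral ν0 s| ≤ ε₁ * MVg :=
    le_trans (hdiff ν0) (mul_le_mul_of_nonneg_left hbd0 (le_of_lt hε₁))
  have h3 : dist (sintegral (νn n) s) (sintegral ν0 s) < ε/2 := hN₂ n hn
  rw [Real.dist_eq] at h3 ⊢
  have hε₁M : ε₁ * MVg ≤ ε/4 := by
    rw [hε₁def, div_mul_eq_mul_div, div_le_div_iff₀ (by linarith) (by norm_num)]
    nlinarith
  have key : |sintegral (νn n) g - sintegral ν0 g|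
      ≤ |sintegral (νn n) g - sintegral (νn n) s| + |sintegral (νn n) s - sintegral ν0 s|
        + |sintegral ν0 s - sintegral ν0 g| := by
    have a1 := abs_sub_le (sintegral (νn n) g) (sintegral (νn n) s) (sintegral ν0 g)
    have a2 := abs_sub_le (sintegral (νn n) s) (sintegral ν0 s) (sintegral ν0 g)
    linarith
  rw [abs_sub_comm (sintegral ν0 g)] at h2
  linarith

end helly

section l1l2
variable {X : Type*} [MeasurableSpace X]

/-- Cauchy–Schwarz: the `L¹` norm is controlled by the `L²` norm on a finite measure space. -/
lemma integral_abs_le_sqrt_mul_norm (μ : MeasureTheory.Measure X) [IsFiniteMeasure μ]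
    (u : Lp ℝ 2 μ) :
    ∫ y, |u y| ∂μ ≤ Real.sqrt (μ Set.univ).toReal * ‖u‖ := by
  have hmem2 : MemLp (u : X → ℝ) 2 μ := Lp.memLp u
  have habs : MemLp (fun y => |u y|) (ENNReal.ofReal 2) μ := by
    have := hmem2.norm
    simpa [Real.norm_eq_abs, ENNReal.ofReal_ofNat] using this
  have hconst : MemLp (fun _ : X => (1:ℝ)) (ENNReal.ofReal 2) μ := memLp_const 1
  have hconj : Real.HolderConjugate 2 2 := Real.HolderConjugate.two_two
  have key := integral_mul_le_Lp_mul_Lq_of_nonneg hconj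
    (Filter.Eventually.of_forall (fun _ => zero_le_one))
    (Filter.Eventually.of_forall (fun y => abs_nonneg (u y))) hconst habs
  have h1 : ∫ a, (1:ℝ) * |u a| ∂μ = ∫ a, |u a| ∂μ := by simp
  have h2 : (∫ _a, (1:ℝ) ^ (2:ℝ) ∂μ) ^ (1/(2:ℝ))
      = Real.sqrt (μ Set.univ).toReal := by
    rw [Real.sqrt_eq_rpow]
    congr 1
    simp [Measure.real]
  have h3 : (∫ a, |u a| ^ (2:ℝ) ∂μ) ^ (1/(2:ℝ)) = ‖u‖ := by
    rw [Lp.norm_def, hmem2.eLpNorm_eq_integral_rpow_norm (by norm_num) (by norm_num)]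
    rw [ENNReal.toReal_ofReal (Real.rpow_nonneg
      (integral_nonneg fun a => Real.rpow_nonneg (norm_nonneg _) _) _)]
    norm_num [Real.norm_eq_abs]
  rw [h1, h2, h3] at key
  exact key

end l1l2

section conv

variable {n₀ : ℕ} {Ω : Set (EuclideanSpace ℝ (Fin n₀))}
  {f : EuclideanSpace ℝ (Fin n₀) → ℝ} {Mf : ℝ}
  {b : ℝ → ℝ} {Lb : ℝ} {C₁ C₂ : ℝ}

/-- continuity of `b` from the Lipschitz estimate -/
lemma b_continuous (hLb : 0 ≤ Lb) (hblip : ∀ s t : ℝ, |b s - b t| ≤ Lb * |s - t|) :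
    Continuous b := by
  have : LipschitzWith Lb.toNNReal b := by
    apply LipschitzWith.of_dist_le_mul
    intro s t
    rw [Real.dist_eq, Real.dist_eq]
    calc |b s - b t| ≤ Lb * |s - t| := hblip s t
    _ = Lb.toNNReal * |s - t| := by rw [Real.coe_toNNReal _ hLb]
  exact this.continuous

variable [IsFiniteMeasure (volume.restrict Ω)]

/-- integrability of the convolution integrand -/
lemma conv_integrable (hΩmeas : MeasurableSet Ω) (hf : Measurable f)
    (hMf : ∀ z, |f z| ≤ Mf) (hLb : 0 ≤ Lb)
    (hblip : ∀ s t : ℝ, |b s - b t| ≤ Lb * |s - t|) (hC₁ : 0 ≤ C₁)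
    (hbgrowth : ∀ s : ℝ, |b s| ≤ C₁ * |s| + C₂)
    (u : Lp ℝ 2 (volume.restrict Ω)) (x : EuclideanSpace ℝ (Fin n₀)) :
    Integrable (fun y => b (u y) * f (x - y)) (volume.restrict Ω) := by
  have hu1 : Integrable (u : EuclideanSpace ℝ (Fin n₀) → ℝ) (volume.restrict Ω) :=
    ((Lp.memLp u).mono_exponent (by norm_num)).integrable le_rfl
  have hbu : Integrable (fun y => b (u y)) (volume.restrict Ω) := by
    refine Integrable.mono ((hu1.abs.const_mul C₁).add (integrable_const C₂))
      ((b_continuous hLb hblip).comp_aestronglyMeasurable (Lp.aestronglyMeasurable u)) ?_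
    refine Filter.Eventually.of_forall fun y => ?_
    have h1 := hbgrowth (u y)
    have h2 : (0:ℝ) ≤ C₁ * |u y| + C₂ := le_trans (abs_nonneg _) h1
    simp only [Pi.add_apply, Real.norm_eq_abs]
    rw [abs_of_nonneg h2]
    exact h1
  have : Integrable (fun y => f (x - y) * b (u y)) (volume.restrict Ω) := by
    refine hbu.bdd_mul (c := Mf) ?_ (Filter.Eventually.of_forall fun y => by rw [Real.norm_eq_abs]; exact hMf _)
    exact (hf.comp (measurable_const.sub measurable_id)).aestronglyMeasurable
  simpa [mul_comm] using this

/-- uniform bound for the convolution integral -/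
lemma conv_bound (hΩmeas : MeasurableSet Ω) (hf : Measurable f)
    (hMf : ∀ z, |f z| ≤ Mf) (hLb : 0 ≤ Lb)
    (hblip : ∀ s t : ℝ, |b s - b t| ≤ Lb * |s - t|) (hC₁ : 0 ≤ C₁) (hC₂ : 0 ≤ C₂)
    (hbgrowth : ∀ s : ℝ, |b s| ≤ C₁ * |s| + C₂)
    (u : Lp ℝ 2 (volume.restrict Ω)) (x : EuclideanSpace ℝ (Fin n₀)) :
    |∫ y in Ω, b (u y) * f (x - y)|
      ≤ Mf * (C₁ * (Real.sqrt ((volume.restrict Ω) Set.univ).toReal * ‖u‖)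
          + C₂ * ((volume.restrict Ω) Set.univ).toReal) := by
  have hMf0 : 0 ≤ Mf := le_trans (abs_nonneg _) (hMf 0)
  have hu1 : Integrable (u : EuclideanSpace ℝ (Fin n₀) → ℝ) (volume.restrict Ω) :=
    ((Lp.memLp u).mono_exponent (by norm_num)).integrable le_rfl
  have hint := conv_integrable hΩmeas hf hMf hLb hblip hC₁ hbgrowth u x
  calc |∫ y in Ω, b (u y) * f (x - y)|
      ≤ ∫ y in Ω, |b (u y) * f (x - y)| := by
        simpa only [Real.norm_eq_abs] using norm_integral_le_integral_norm
          (μ := volume.restrict Ω) (fun y => b (u y) * f (x - y))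
    _ ≤ ∫ y in Ω, (C₁ * |u y| + C₂) * Mf := by
        refine integral_mono_ae hint.abs (((hu1.abs.const_mul C₁).add
          (integrable_const C₂)).mul_const Mf) ?_
        refine Filter.Eventually.of_forall fun y => ?_
        show |b (u y) * f (x - y)| ≤ (C₁ * |u y| + C₂) * Mf
        rw [abs_mul]
        have h1 : |b (u y)| ≤ C₁ * |u y| + C₂ := hbgrowth _
        have h2 : |f (x - y)| ≤ Mf := hMf _
        exact mul_le_mul h1 h2 (abs_nonneg _) (le_trans (abs_nonneg _) h1)
    _ = Mf * (C₁ * (∫ y in Ω, |u y|) + C₂ * ((volume.restrict Ω) Set.univ).toReal) := by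
        rw [integral_mul_const, integral_add (hu1.abs.const_mul C₁) (integrable_const C₂),
          integral_const_mul, integral_const]
        simp only [smul_eq_mul, Measure.real]
        ring
    _ ≤ _ := by
        have hL1 := integral_abs_le_sqrt_mul_norm (volume.restrict Ω) u
        have : C₁ * (∫ y in Ω, |u y|)
            ≤ C₁ * (Real.sqrt ((volume.restrict Ω) Set.univ).toReal * ‖u‖) :=
          mul_le_mul_of_nonneg_left hL1 hC₁
        nlinarith [mul_le_mul_of_nonneg_left this hMf0]

/-- Lipschitz estimate for the convolution integral in the `Lp` argument -/
lemma conv_lipschitz (hΩmeas : MeasurableSet Ω) (hf : Measurable f)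
    (hMf : ∀ z, |f z| ≤ Mf) (hLb : 0 ≤ Lb)
    (hblip : ∀ s t : ℝ, |b s - b t| ≤ Lb * |s - t|) (hC₁ : 0 ≤ C₁)
    (hbgrowth : ∀ s : ℝ, |b s| ≤ C₁ * |s| + C₂)
    (u v : Lp ℝ 2 (volume.restrict Ω)) (x : EuclideanSpace ℝ (Fin n₀)) :
    |(∫ y in Ω, b (u y) * f (x - y)) - ∫ y in Ω, b (v y) * f (x - y)|
      ≤ Mf * Lb * Real.sqrt ((volume.restrict Ω) Set.univ).toReal * ‖u - v‖ := by
  have hMf0 : 0 ≤ Mf := le_trans (abs_nonneg _) (hMf 0)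
  have hintu := conv_integrable hΩmeas hf hMf hLb hblip hC₁ hbgrowth u x
  have hintv := conv_integrable hΩmeas hf hMf hLb hblip hC₁ hbgrowth v x
  have huv1 : Integrable ((u - v : Lp ℝ 2 (volume.restrict Ω)) :
      EuclideanSpace ℝ (Fin n₀) → ℝ) (volume.restrict Ω) :=
    ((Lp.memLp (u - v)).mono_exponent (by norm_num)).integrable le_rfl
  rw [← integral_sub hintu hintv]
  calc |∫ y in Ω, (b (u y) * f (x - y) - b (v y) * f (x - y))|
      ≤ ∫ y in Ω, |b (u y) * f (x - y) - b (v y) * f (x - y)| := by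
        simpa only [Real.norm_eq_abs] using norm_integral_le_integral_norm
          (μ := volume.restrict Ω) (fun y => b (u y) * f (x - y) - b (v y) * f (x - y))
    _ ≤ ∫ y in Ω, Mf * Lb * |((u - v : Lp ℝ 2 (volume.restrict Ω)) : _) y| := by
        refine integral_mono_ae (hintu.sub hintv).abs (huv1.abs.const_mul _) ?_
        filter_upwards [Lp.coeFn_sub u v] with y hy
        show |b (u y) * f (x - y) - b (v y) * f (x - y)|
          ≤ Mf * Lb * |((u - v : Lp ℝ 2 (volume.restrict Ω)) : _) y|
        rw [hy]
        simp only [Pi.sub_apply]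
        calc |b (u y) * f (x - y) - b (v y) * f (x - y)|
            = |(b (u y) - b (v y)) * f (x - y)| := by ring_nf
          _ = |b (u y) - b (v y)| * |f (x - y)| := abs_mul _ _
          _ ≤ (Lb * |u y - v y|) * Mf :=
              mul_le_mul (hblip _ _) (hMf _) (abs_nonneg _)
                (by positivity)
          _ = Mf * Lb * |u y - v y| := by ring
    _ = Mf * Lb * ∫ y in Ω, |((u - v : Lp ℝ 2 (volume.restrict Ω)) : _) y| :=
        integral_const_mul _ _
    _ ≤ _ := by
        have hL1 := integral_abs_le_sqrt_mul_norm (volume.restrict Ω) (u - v)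
        calc Mf * Lb * ∫ y in Ω, |((u - v : Lp ℝ 2 (volume.restrict Ω)) : _) y|
            ≤ Mf * Lb * (Real.sqrt ((volume.restrict Ω) Set.univ).toReal * ‖u - v‖) :=
              mul_le_mul_of_nonneg_left hL1 (by positivity)
          _ = _ := by ring

/-- strong measurability in `x` of the convolution integral -/
lemma conv_measurable (hΩmeas : MeasurableSet Ω) (hf : Measurable f)
    (hLb : 0 ≤ Lb) (hblip : ∀ s t : ℝ, |b s - b t| ≤ Lb * |s - t|)
    (u : Lp ℝ 2 (volume.restrict Ω)) :
    StronglyMeasurable (fun x => ∫ y in Ω, b (u y) * f (x - y)) := by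
  have hjoint : StronglyMeasurable (Function.uncurry
      (fun (x y : EuclideanSpace ℝ (Fin n₀)) => b (u y) * f (x - y))) := by
    apply Measurable.stronglyMeasurable
    have m1 : Measurable fun p : EuclideanSpace ℝ (Fin n₀) × EuclideanSpace ℝ (Fin n₀) =>
        b (u p.2) := (b_continuous hLb hblip).measurable.comp
      ((Lp.stronglyMeasurable u).measurable.comp measurable_snd)
    have m2 : Measurable fun p : EuclideanSpace ℝ (Fin n₀) × EuclideanSpace ℝ (Fin n₀) =>
        f (p.1 - p.2) := hf.comp (measurable_fst.sub measurable_snd)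
    exact m1.mul m2
  exact hjoint.integral_prod_right'

end conv

set_option maxHeartbeats 1600000 in
/-- continuous-delay part of Lemma 1: If `φ ↦ ν_φ` has uniformly bounded
total variation (A1) and is pointwise continuous in the sense that `φⁿ → φ` in `C`
implies `ν_{φⁿ}([−r,θ]) → ν_φ([−r,θ])` for every `θ` (A2), and `b` is Lipschitz with
constant `L_b` and of linear growth `|b(s)| ≤ C₁|s| + C₂`, then
`F_c(φ)(x) = ∫_{[−r,0]} (∫_Ω b(φ(θ)(y)) f(x−y) dy) dν_φ(θ)` defines a continuous map
`C → L²(Ω)`: `φⁿ → φ` in `C` implies `‖F_c(φⁿ) − F_c(φ)‖_{L²(Ω)} → 0`. -/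
theorem stmt5
    {n₀ : ℕ} (Ω : Set (EuclideanSpace ℝ (Fin n₀)))
    (hΩmeas : MeasurableSet Ω) (hΩbdd : Bornology.IsBounded Ω)
    (hΩpos : 0 < volume Ω)
    (r : ℝ) (hr : 0 < r)
    (f : EuclideanSpace ℝ (Fin n₀) → ℝ) (hf : Measurable f)
    (Mf : ℝ) (hMf : ∀ z, |f z| ≤ Mf)
    (ν : C(Set.Icc (-r) (0:ℝ), Lp ℝ 2 (volume.restrict Ω)) →
      MeasureTheory.SignedMeasure (Set.Icc (-r) (0:ℝ)))
    (MVg : ℝ) (hMVg : ∀ φ, tvNorm (ν φ) ≤ MVg)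
    (hνcont : ∀ θ : Set.Icc (-r) (0:ℝ),
      ∀ (φseq : ℕ → C(Set.Icc (-r) (0:ℝ), Lp ℝ 2 (volume.restrict Ω)))
        (φ : C(Set.Icc (-r) (0:ℝ), Lp ℝ 2 (volume.restrict Ω))),
        Tendsto (fun n => ‖φseq n - φ‖) atTop (nhds 0) →
        Tendsto (fun n => ν (φseq n) {τ : Set.Icc (-r) (0:ℝ) | (τ : ℝ) ≤ (θ : ℝ)})
          atTop (nhds (ν φ {τ : Set.Icc (-r) (0:ℝ) | (τ : ℝ) ≤ (θ : ℝ)})))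
    (b : ℝ → ℝ) (Lb : ℝ) (hLb : 0 ≤ Lb)
    (hblip : ∀ s t : ℝ, |b s - b t| ≤ Lb * |s - t|)
    (C₁ C₂ : ℝ) (hC₁ : 0 ≤ C₁) (hC₂ : 0 ≤ C₂)
    (hbgrowth : ∀ s : ℝ, |b s| ≤ C₁ * |s| + C₂) :
    (∀ φ : C(Set.Icc (-r) (0:ℝ), Lp ℝ 2 (volume.restrict Ω)),
      MemLp (fun x => sintegral (ν φ) (fun θ => ∫ y in Ω, b (φ θ y) * f (x - y)))
        2 (volume.restrict Ω)) ∧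
    (∀ (φseq : ℕ → C(Set.Icc (-r) (0:ℝ), Lp ℝ 2 (volume.restrict Ω)))
       (φ : C(Set.Icc (-r) (0:ℝ), Lp ℝ 2 (volume.restrict Ω))),
      Tendsto (fun n => ‖φseq n - φ‖) atTop (nhds 0) →
      Tendsto (fun n => eLpNorm (fun x =>
          sintegral (ν (φseq n)) (fun θ => ∫ y in Ω, b ((φseq n) θ y) * f (x - y)) -
          sintegral (ν φ) (fun θ => ∫ y in Ω, b (φ θ y) * f (x - y)))
          2 (volume.restrict Ω)) atTop (nhds 0)) := by
  -- finiteness of the measure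
  have hvol : volume Ω < ⊤ := hΩbdd.measure_lt_top
  haveI : IsFiniteMeasure (volume.restrict Ω) :=
    ⟨by rwa [Measure.restrict_apply_univ]⟩
  have hMf0 : 0 ≤ Mf := le_trans (abs_nonneg _) (hMf 0)
  set V : ℝ := ((volume.restrict Ω) Set.univ).toReal with hVdef
  have hV0 : 0 ≤ V := ENNReal.toReal_nonneg
  set G : C(Set.Icc (-r) (0:ℝ), Lp ℝ 2 (volume.restrict Ω)) →
      EuclideanSpace ℝ (Fin n₀) → Set.Icc (-r) (0:ℝ) → ℝ :=
    fun ψ x θ => ∫ y in Ω, b (ψ θ y) * f (x - y) with hGdef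
  set c : ℝ := Mf * Lb * Real.sqrt V with hcdef
  have hc0 : 0 ≤ c := by
    apply mul_nonneg (mul_nonneg hMf0 hLb) (Real.sqrt_nonneg _)
  -- the Lipschitz functional is continuous on Lp
  have hlipfun : ∀ (x : EuclideanSpace ℝ (Fin n₀)) (u v : Lp ℝ 2 (volume.restrict Ω)),
      |(∫ y in Ω, b (u y) * f (x - y)) - ∫ y in Ω, b (v y) * f (x - y)| ≤ c * ‖u - v‖ :=
    fun x u v => conv_lipschitz hΩmeas hf hMf hLb hblip hC₁ hbgrowth u v x
  have hGcont : ∀ ψ x, Continuous fun θ => G ψ x θ := by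
    intro ψ x
    have hout : Continuous fun u : Lp ℝ 2 (volume.restrict Ω) =>
        ∫ y in Ω, b (u y) * f (x - y) := by
      have : LipschitzWith c.toNNReal fun u : Lp ℝ 2 (volume.restrict Ω) =>
          ∫ y in Ω, b (u y) * f (x - y) := by
        apply LipschitzWith.of_dist_le_mul
        intro u v
        rw [Real.dist_eq, dist_eq_norm]
        refine le_trans (hlipfun x u v) ?_
        exact mul_le_mul_of_nonneg_right (by rw [Real.coe_toNNReal _ hc0])
          (norm_nonneg _)
      exact this.continuous
    exact hout.comp ψ.continuous
  -- per-φ constant bound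
  set KG : C(Set.Icc (-r) (0:ℝ), Lp ℝ 2 (volume.restrict Ω)) → ℝ :=
    fun ψ => Mf * (C₁ * (Real.sqrt V * ‖ψ‖) + C₂ * V) with hKGdef
  have hKG0 : ∀ ψ, 0 ≤ KG ψ := by
    intro ψ
    apply mul_nonneg hMf0
    apply add_nonneg
    · exact mul_nonneg hC₁ (mul_nonneg (Real.sqrt_nonneg _) (norm_nonneg _))
    · exact mul_nonneg hC₂ hV0
  have hGbdd : ∀ ψ x θ, |G ψ x θ| ≤ KG ψ := by
    intro ψ x θ
    have h := conv_bound hΩmeas hf hMf hLb hblip hC₁ hC₂ hbgrowth (ψ θ) x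
    have h2 : ‖ψ θ‖ ≤ ‖ψ‖ := ψ.norm_coe_le_norm θ
    refine h.trans ?_
    rw [hKGdef]
    have : C₁ * (Real.sqrt V * ‖ψ θ‖) ≤ C₁ * (Real.sqrt V * ‖ψ‖) :=
      mul_le_mul_of_nonneg_left
        (mul_le_mul_of_nonneg_left h2 (Real.sqrt_nonneg _)) hC₁
    have := add_le_add this (le_refl (C₂ * V))
    exact mul_le_mul_of_nonneg_left this hMf0
  have hGint : ∀ ψ x (m : MeasureTheory.Measure (Set.Icc (-r) (0:ℝ)))
      (_ : IsFiniteMeasure m), Integrable (G ψ x) m :=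
    fun ψ x m hm => integrable_of_bdd (hGcont ψ x).aestronglyMeasurable (hGbdd ψ x)
  -- sintegral bound
  have hsintbdd : ∀ ψ x (m : MeasureTheory.SignedMeasure (Set.Icc (-r) (0:ℝ))),
      tvNorm m ≤ MVg → |sintegral m (G ψ x)| ≤ KG ψ * MVg := by
    intro ψ x m hm
    refine (abs_sintegral_le m (hGbdd ψ x)).trans ?_
    exact mul_le_mul_of_nonneg_left hm (hKG0 ψ)
  -- measurability in x
  have hFmeas : ∀ ψ, AEStronglyMeasurable (fun x => sintegral (ν ψ) (G ψ x))
      (volume.restrict Ω) := by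
    intro ψ
    have hum : Measurable (Function.uncurry
        fun (θ : Set.Icc (-r) (0:ℝ)) (x : EuclideanSpace ℝ (Fin n₀)) => G ψ x θ) := by
      apply measurable_uncurry_of_continuous_of_measurable
      · exact fun x => hGcont ψ x
      · exact fun θ => (conv_measurable hΩmeas hf hLb hblip (ψ θ)).measurable
    have hsm := hum.stronglyMeasurable
    have h1 : StronglyMeasurable fun x : EuclideanSpace ℝ (Fin n₀) =>
        ∫ θ, G ψ x θ ∂(ν ψ).toJordanDecomposition.posPart :=
      hsm.integral_prod_left
    have h2 : StronglyMeasurable fun x : EuclideanSpace ℝ (Fin n₀) =>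
        ∫ θ, G ψ x θ ∂(ν ψ).toJordanDecomposition.negPart :=
      hsm.integral_prod_left
    exact (h1.sub h2).aestronglyMeasurable
  constructor
  · -- part 1 : MemLp
    intro φ
    refine MemLp.of_bound (hFmeas φ) (KG φ * MVg) ?_
    refine Filter.Eventually.of_forall fun x => ?_
    rw [Real.norm_eq_abs]
    exact hsintbdd φ x (ν φ) (hMVg φ)
  · -- part 2 : continuity
    intro φseq φ hconv
    have hMVg0 : 0 ≤ MVg := le_trans (tvNorm_nonneg (ν φ)) (hMVg φ)
    obtain ⟨R, hRmem⟩ := hconv.bddAbove_range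
    have hRn : ∀ n, ‖φseq n - φ‖ ≤ R := fun n => hRmem ⟨n, rfl⟩
    -- the pointwise difference bound between G's
    have hGdiff : ∀ n x θ, |G (φseq n) x θ - G φ x θ| ≤ c * ‖φseq n - φ‖ := by
      intro n x θ
      have h := hlipfun x ((φseq n) θ) (φ θ)
      refine h.trans ?_
      apply mul_le_mul_of_nonneg_left _ hc0
      have heq : (φseq n) θ - φ θ = (φseq n - φ) θ := by
        simp [ContinuousMap.sub_apply]
      rw [heq]
      exact (φseq n - φ).norm_coe_le_norm θ
    -- term 1 bound
    have hT1 : ∀ n x, |sintegral (ν (φseq n)) (G (φseq n) x)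
        - sintegral (ν (φseq n)) (G φ x)| ≤ (c * ‖φseq n - φ‖) * MVg := by
      intro n x
      rw [sintegral_sub _ (hGint (φseq n) x _ inferInstance)
        (hGint (φseq n) x _ inferInstance) (hGint φ x _ inferInstance)
        (hGint φ x _ inferInstance)]
      refine (abs_sintegral_le _ (fun θ => hGdiff n x θ)).trans ?_
      exact mul_le_mul_of_nonneg_left (hMVg _)
        (mul_nonneg hc0 (norm_nonneg _))
    -- term 2 : Helly
    have hT2 : ∀ x, Tendsto (fun n => sintegral (ν (φseq n)) (G φ x)) atTop
        (𝓝 (sintegral (ν φ) (G φ x))) := by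
      intro x
      exact helly hr (fun n => ν (φseq n)) (ν φ) (fun n => hMVg _) (hMVg φ)
        (fun θ => hνcont θ φseq φ hconv) (G φ x) (hGcont φ x)
    -- the difference functions
    set D : ℕ → EuclideanSpace ℝ (Fin n₀) → ℝ :=
      fun n x => sintegral (ν (φseq n)) (G (φseq n) x) - sintegral (ν φ) (G φ x)
      with hDdef
    have hDmeas : ∀ n, AEStronglyMeasurable (D n) (volume.restrict Ω) :=
      fun n => (hFmeas (φseq n)).sub (hFmeas φ)
    have hDbdd : ∀ n x, |D n x| ≤ (c * R) * MVg + 2 * (KG φ * MVg) := by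
      intro n x
      have h1 := hT1 n x
      have h2 := hsintbdd φ x (ν (φseq n)) (hMVg _)
      have h3 := hsintbdd φ x (ν φ) (hMVg φ)
      have h4 : (c * ‖φseq n - φ‖) * MVg ≤ (c * R) * MVg :=
        mul_le_mul_of_nonneg_right
          (mul_le_mul_of_nonneg_left (hRn n) hc0) hMVg0
      have h5 : |D n x| ≤ |sintegral (ν (φseq n)) (G (φseq n) x)
          - sintegral (ν (φseq n)) (G φ x)|
          + |sintegral (ν (φseq n)) (G φ x)| + |sintegral (ν φ) (G φ x)| := by
        rw [hDdef]
        have := abs_sub_le (sintegral (ν (φseq n)) (G (φseq n) x))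
          (sintegral (ν (φseq n)) (G φ x)) (sintegral (ν φ) (G φ x))
        have h6 := abs_sub (sintegral (ν (φseq n)) (G φ x)) (sintegral (ν φ) (G φ x))
        dsimp only
        linarith
      linarith
    have hDpt : ∀ x, Tendsto (fun n => D n x) atTop (𝓝 0) := by
      intro x
      have t1 : Tendsto (fun n => sintegral (ν (φseq n)) (G (φseq n) x)
          - sintegral (ν (φseq n)) (G φ x)) atTop (𝓝 0) := by
        apply squeeze_zero_norm (fun n => by
          simpa [Real.norm_eq_abs] using hT1 n x)
        have : Tendsto (fun n => (c * ‖φseq n - φ‖) * MVg) atTop (𝓝 ((c * 0) * MVg)) :=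
          ((hconv.const_mul c).mul_const MVg)
        simpa using this
      have t2 : Tendsto (fun n => sintegral (ν (φseq n)) (G φ x)
          - sintegral (ν φ) (G φ x)) atTop (𝓝 0) := by
        have := (hT2 x).sub (tendsto_const_nhds
          (x := sintegral (ν φ) (G φ x)) (f := atTop))
        simpa using this
      have heq : (fun n => D n x) = fun n =>
          (sintegral (ν (φseq n)) (G (φseq n) x) - sintegral (ν (φseq n)) (G φ x))
          + (sintegral (ν (φseq n)) (G φ x) - sintegral (ν φ) (G φ x)) := by
        funext n
        rw [hDdef]
        ring
      rw [heq]
      simpa using t1.add t2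
    have := tendsto_eLpNorm_two_of_bdd (volume.restrict Ω) D hDmeas hDbdd hDpt
    exact this
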